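/- Let a_1 ≤ … ≤ a_n and b_1 ≤ … ≤ b_n be nondecreasing sequences of positive integers such that ∑_{k=1}^{n} gcd(a_k, N) = ∑_{k=1}^{n} gcd(b_k, N) for every positive integer N dividing L := lcm(a_1,…,a_n,b_1,…,b_n). Then a_i = b_i for all i. -/

import Mathlib

open Finset

theorem gcd_sum_on_divisors_of_lcm_suffices
    (n : ℕ) (a b : Fin n → ℕ) (ha : ∀ i, 0 < a i) (hb : ∀ i, 0 < b i)
    (hamono : Monotone a) (hbmono : Monotone b)
    (h : ∀ N : ℕ, 0 < N →
      N ∣ Finset.univ.lcm (fun k => Nat.lcm (a k) (b k)) →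
      ∑ k, Nat.gcd (a k) N = ∑ k, Nat.gcd (b k) N) :
    ∀ i, a i = b i := by
  set L : ℕ := Finset.univ.lcm (fun k => Nat.lcm (a k) (b k)) with hLdef
  have hL : L ≠ 0 := by
    intro h0
    rw [hLdef, Finset.lcm_eq_zero_iff] at h0
    obtain ⟨k, -, hk⟩ := h0
    exact (Nat.lcm_ne_zero (ha k).ne' (hb k).ne') hk
  have haL : ∀ k, a k ∣ L := fun k =>
    dvd_trans (Nat.dvd_lcm_left _ _) (Finset.dvd_lcm (mem_univ k))
  have hbL : ∀ k, b k ∣ L := fun k =>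
    dvd_trans (Nat.dvd_lcm_right _ _) (Finset.dvd_lcm (mem_univ k))
  have haLe : ∀ k, a k ≤ L := fun k => Nat.le_of_dvd (Nat.pos_of_ne_zero hL) (haL k)
  have hbLe : ∀ k, b k ≤ L := fun k => Nat.le_of_dvd (Nat.pos_of_ne_zero hL) (hbL k)
  -- gcd sum as totient-weighted divisor counts
  have lemA : ∀ (c : Fin n → ℕ), (∀ i, 0 < c i) → ∀ N : ℕ, 0 < N →
      ∑ k, Nat.gcd (c k) N
        = ∑ d ∈ N.divisors, Nat.totient d * (univ.filter (fun k => d ∣ c k)).card := by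
    intro c hc N hN
    have step : ∀ k, Nat.gcd (c k) N
        = ∑ d ∈ N.divisors.filter (· ∣ c k), Nat.totient d := by
      intro k
      have h1 : (Nat.gcd (c k) N).divisors = N.divisors.filter (· ∣ c k) := by
        ext d
        simp only [Nat.mem_divisors, Nat.dvd_gcd_iff, mem_filter]
        constructor
        · rintro ⟨⟨h1, h2⟩, -⟩; exact ⟨⟨h2, hN.ne'⟩, h1⟩
        · rintro ⟨⟨h1, -⟩, h2⟩
          exact ⟨⟨h2, h1⟩, Nat.gcd_ne_zero_right hN.ne'⟩
      conv_lhs => rw [← Nat.sum_totient (Nat.gcd (c k) N)]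
      rw [h1]
    calc ∑ k, Nat.gcd (c k) N
        = ∑ k, ∑ d ∈ N.divisors.filter (· ∣ c k), Nat.totient d := by
          exact Finset.sum_congr rfl fun k _ => step k
      _ = ∑ k, ∑ d ∈ N.divisors, if d ∣ c k then Nat.totient d else 0 := by
          exact Finset.sum_congr rfl fun k _ => Finset.sum_filter _ _
      _ = ∑ d ∈ N.divisors, ∑ k, if d ∣ c k then Nat.totient d else 0 := Finset.sum_comm
      _ = ∑ d ∈ N.divisors, Nat.totient d * (univ.filter (fun k => d ∣ c k)).card := by
          refine Finset.sum_congr rfl fun d _ => ?_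
          rw [← Finset.sum_filter, Finset.sum_const, smul_eq_mul, mul_comm]
  -- divisor counts agree
  have hdvd : ∀ m : ℕ, 0 < m →
      (univ.filter (fun k => m ∣ a k)).card = (univ.filter (fun k => m ∣ b k)).card := by
    intro m
    induction m using Nat.strong_induction_on with
    | _ m IH =>
    intro hm
    by_cases hmL : m ∣ L
    · have hsum := h m hm hmL
      rw [lemA a ha m hm, lemA b hb m hm, ← Nat.insert_self_properDivisors hm.ne',
        Finset.sum_insert Nat.self_notMem_properDivisors,
        Finset.sum_insert Nat.self_notMem_properDivisors] at hsum
      have hrest : ∑ d ∈ m.properDivisors, Nat.totient d * (univ.filter (fun k => d ∣ a k)).card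
          = ∑ d ∈ m.properDivisors, Nat.totient d * (univ.filter (fun k => d ∣ b k)).card := by
        refine Finset.sum_congr rfl fun d hd => ?_
        obtain ⟨hd1, hd2⟩ := Nat.mem_properDivisors.mp hd
        have hd0 : 0 < d := Nat.pos_of_dvd_of_pos hd1 hm
        rw [IH d hd2 hd0]
      rw [hrest] at hsum
      have := Nat.add_right_cancel hsum
      exact Nat.eq_of_mul_eq_mul_left (Nat.totient_pos.mpr hm) this
    · have e1 : univ.filter (fun k => m ∣ a k) = ∅ := by
        refine Finset.filter_eq_empty_iff.mpr fun k _ hk => hmL (hk.trans (haL k))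
      have e2 : univ.filter (fun k => m ∣ b k) = ∅ := by
        refine Finset.filter_eq_empty_iff.mpr fun k _ hk => hmL (hk.trans (hbL k))
      rw [e1, e2]
  -- splitting divisibility counts into exact-value counts
  have split : ∀ (c : Fin n → ℕ), (∀ i, 0 < c i) → (∀ k, c k ≤ L) → ∀ m : ℕ, 0 < m →
      (univ.filter (fun k => m ∣ c k)).card
        = (univ.filter (fun k => c k = m)).card
          + ∑ j ∈ Finset.Icc 2 L, (univ.filter (fun k => c k = j * m)).card := by
    intro c hc hcL m hm
    have hset : univ.filter (fun k => m ∣ c k)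
        = univ.filter (fun k => c k = m)
          ∪ (Finset.Icc 2 L).biUnion (fun j => univ.filter (fun k => c k = j * m)) := by
      ext k
      simp only [mem_filter, mem_union, mem_biUnion, mem_Icc, mem_univ, true_and]
      constructor
      · intro hdvd'
        obtain ⟨j, hj⟩ := hdvd'
        have hj' : c k = j * m := by rw [hj, Nat.mul_comm]
        rcases Nat.lt_or_ge j 2 with hj2 | hj2
        · interval_cases j
          · exact absurd (hj' ▸ hc k) (by simp)
          · left; rw [hj', one_mul]
        · right
          refine ⟨j, ⟨hj2, ?_⟩, hj'⟩
          calc j ≤ j * m := Nat.le_mul_of_pos_right j hm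
            _ = c k := hj'.symm
            _ ≤ L := hcL k
      · rintro (hk | ⟨j, -, hk⟩)
        · exact hk ▸ dvd_refl m
        · exact hk ▸ dvd_mul_left m j
    rw [hset, Finset.card_union_of_disjoint, Finset.card_biUnion]
    · intro j hj j' hj' hjj'
      simp only [Finset.disjoint_left, mem_filter, mem_univ, true_and]
      intro k hk hk'
      exact hjj' (Nat.eq_of_mul_eq_mul_right hm (hk ▸ hk'))
    · simp only [Finset.disjoint_left, mem_filter, mem_biUnion, mem_univ, true_and, mem_Icc]
      rintro k hk ⟨j, ⟨hj2, -⟩, hk'⟩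
      have : m < j * m := by
        calc m = 1 * m := (one_mul m).symm
          _ < j * m := (Nat.mul_lt_mul_right hm).mpr (by omega)
      omega
  -- exact-value counts agree
  have key : ∀ t : ℕ, ∀ m : ℕ, 0 < m → L < m + t →
      (univ.filter (fun k => a k = m)).card = (univ.filter (fun k => b k = m)).card := by
    intro t
    induction t with
    | zero =>
      intro m hm hLm
      have e1 : univ.filter (fun k => a k = m) = ∅ :=
        Finset.filter_eq_empty_iff.mpr fun k _ hk => by have := haLe k; omega
      have e2 : univ.filter (fun k => b k = m) = ∅ :=
        Finset.filter_eq_empty_iff.mpr fun k _ hk => by have := hbLe k; omega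
      rw [e1, e2]
    | succ t IH =>
      intro m hm hLm
      have h1 := split a ha haLe m hm
      have h2 := split b hb hbLe m hm
      have h3 := hdvd m hm
      have h4 : ∑ j ∈ Finset.Icc 2 L, (univ.filter (fun k => a k = j * m)).card
          = ∑ j ∈ Finset.Icc 2 L, (univ.filter (fun k => b k = j * m)).card := by
        refine Finset.sum_congr rfl fun j hj => ?_
        have hj2 : 2 ≤ j := (Finset.mem_Icc.mp hj).1
        have hjm : 0 < j * m := Nat.mul_pos (by omega) hm
        refine IH (j * m) hjm ?_
        have : m + m ≤ j * m := by
          calc m + m = 2 * m := by ring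
            _ ≤ j * m := Nat.mul_le_mul_right m hj2
        omega
      omega
  have hcnt : ∀ m : ℕ,
      (univ.filter (fun k => a k = m)).card = (univ.filter (fun k => b k = m)).card := by
    intro m
    rcases Nat.eq_zero_or_pos m with rfl | hm
    · have e1 : univ.filter (fun k => a k = 0) = ∅ :=
        Finset.filter_eq_empty_iff.mpr fun k _ hk => by have := ha k; omega
      have e2 : univ.filter (fun k => b k = 0) = ∅ :=
        Finset.filter_eq_empty_iff.mpr fun k _ hk => by have := hb k; omega
      rw [e1, e2]
    · exact key (L + 1) m hm (by omega)
  -- conclude via multisets and sortedness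
  have hcount : ∀ (c : Fin n → ℕ) (m : ℕ),
      Multiset.count m (Multiset.map c univ.val) = (univ.filter (fun k => c k = m)).card := by
    intro c m
    rw [Multiset.count_map]
    simp [Finset.card, Finset.filter, eq_comm]
  have hms : Multiset.map a univ.val = Multiset.map b univ.val := by
    refine Multiset.ext.mpr fun m => ?_
    rw [hcount a m, hcount b m, hcnt m]
  have hlist : (List.ofFn a : Multiset ℕ) = (List.ofFn b : Multiset ℕ) := by
    have e : ∀ c : Fin n → ℕ, (List.ofFn c : Multiset ℕ) = Multiset.map c univ.val := by
      intro c; rw [List.ofFn_eq_map]; rfl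
    rw [e a, e b, hms]
  have hperm : (List.ofFn a).Perm (List.ofFn b) := Multiset.coe_eq_coe.mp hlist
  have heq : List.ofFn a = List.ofFn b :=
    List.Perm.eq_of_sortedLE
      (List.sortedLE_ofFn_iff.mpr hamono) (List.sortedLE_ofFn_iff.mpr hbmono) hperm
  have := List.ofFn_injective heq
  intro i; rw [this]
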